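/- Let φ be the piecewise function φ(λ) = (3/5)λ + 3/4 on [0, 25/48], φ(λ) = 3λ + 2(1 − √(3λ)) on [25/48, 3/4], φ(λ) = λ + 1/2 on [3/4, 1]. Then for every ε > 0 and every λ with 0 ≤ λ ≤ (17 + 4√15)/49 − ε, one has φ(λ) − λ/2 ≤ 1 − ε/10 and φ(λ) + λ/2 ≤ 3/2 − ε/10. -/
import Mathlib


/-- The zero-density exponent function `φ`. -/
noncomputable def phiExp (l : ℝ) : ℝ :=
  if l ≤ 25/48 then 3/5 * l + 3/4
  else if l ≤ 3/4 then 3 * l + 2 * (1 - Real.sqrt (3 * l))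
  else l + 1/2

theorem phiExp_bounds_below_lambda2 :
    ∀ ε : ℝ, 0 < ε → ∀ l : ℝ, 0 ≤ l → l ≤ (17 + 4 * Real.sqrt 15)/49 - ε →
      phiExp l - l/2 ≤ 1 - ε/10 ∧ phiExp l + l/2 ≤ 3/2 - ε/10 := by
  intro ε hε l hl0 hl2
  set s := Real.sqrt 15 with hs
  have hs0 : 0 ≤ s := Real.sqrt_nonneg 15
  have hs2 : s ^ 2 = 15 := Real.sq_sqrt (by norm_num)
  have hslo : 3.8 < s := by nlinarith
  have hshi : s < 3.9 := by nlinarith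
  have hεle : ε ≤ (17 + 4 * s) / 49 := by linarith
  by_cases h : l ≤ 25/48
  · simp only [phiExp, if_pos h]
    constructor <;> nlinarith
  · have h34 : l ≤ 3/4 := by nlinarith
    simp only [phiExp, if_neg h, if_pos h34]
    set t := Real.sqrt (3 * l) with ht
    have ht2 : t ^ 2 = 3 * l := Real.sq_sqrt (by linarith)
    have ht0 : 0 ≤ t := Real.sqrt_nonneg _
    have htlo : 5/4 ≤ t := by nlinarith [Real.sqrt_nonneg (3*l)]
    have hthi : t ≤ (6 + s) / 7 := by nlinarith
    constructor
    · nlinarith [mul_nonneg (sub_nonneg.2 htlo) (sub_nonneg.2 hthi)]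
    · nlinarith [mul_nonneg (sub_nonneg.2 htlo) (sub_nonneg.2 hthi)]
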